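/- Let A be a real n×m matrix of rank r and let k < r. Among all n×m matrices B of rank at most k, the Frobenius-norm distance ‖A − B‖ is minimized by the truncated singular value decomposition A_k = Σ_{i=1}^k σ_i U_i V_iᵀ; that is, for every n×m matrix B with rank(B) ≤ k one has ‖A − A_k‖ ≤ ‖A − B‖ (Eckart–Young–Mirsky theorem for the Frobenius norm). -/

import Mathlib

open Matrix BigOperators

/-- Squared Frobenius norm of a real matrix. -/
noncomputable def frobSq {n m : ℕ} (X : Matrix (Fin n) (Fin m) ℝ) : ℝ :=
  ∑ i, ∑ j, (X i j) ^ 2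

/-- Frobenius norm of a real matrix. -/
noncomputable def frobNorm {n m : ℕ} (X : Matrix (Fin n) (Fin m) ℝ) : ℝ :=
  Real.sqrt (frobSq X)

local notation "⟪" x ", " y "⟫" => @inner ℝ _ _ x y

lemma frobSq_trace {n m : ℕ} (X : Matrix (Fin n) (Fin m) ℝ) :
    frobSq X = Matrix.trace (X * Xᵀ) := by
  simp [frobSq, Matrix.trace, Matrix.mul_apply, Matrix.diag, sq]

lemma frobSq_conj {n m : ℕ} (U : Matrix (Fin n) (Fin n) ℝ) (V : Matrix (Fin m) (Fin m) ℝ)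
    (hU : Uᵀ * U = 1) (hV : Vᵀ * V = 1) (X : Matrix (Fin n) (Fin m) ℝ) :
    frobSq (U * X * Vᵀ) = frobSq X := by
  rw [frobSq_trace, frobSq_trace]
  have h1 : (U * X * Vᵀ) * (U * X * Vᵀ)ᵀ = U * (X * Xᵀ) * Uᵀ := by
    simp only [Matrix.transpose_mul, Matrix.transpose_transpose]
    simp only [Matrix.mul_assoc]
    rw [← Matrix.mul_assoc Vᵀ V, hV, Matrix.one_mul]
  rw [h1, Matrix.trace_mul_cycle, ← Matrix.mul_assoc, hU, Matrix.one_mul]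

lemma frobSq_cols {n m : ℕ} (X : Matrix (Fin n) (Fin m) ℝ) :
    frobSq X = ∑ j : Fin m, ∑ i : Fin n, (X i j) ^ 2 := by
  exact Finset.sum_comm

lemma abel_bound {n k : ℕ} (hk : k < n) (lam : ℕ → ℝ) (t : Fin n → ℝ)
    (hmono : ∀ i j : ℕ, i ≤ j → lam j ≤ lam i) (hnn : ∀ i, 0 ≤ lam i)
    (ht0 : ∀ i, 0 ≤ t i) (ht1 : ∀ i, t i ≤ 1) (hts : ∑ i, t i ≤ (k : ℝ)) :
    ∑ i : Fin n, lam (i : ℕ) * t i ≤ ∑ x ∈ Finset.range k, lam x := by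
  set c := lam k with hc
  have hc0 : 0 ≤ c := hnn k
  have key : ∀ i : Fin n, lam (i : ℕ) * t i ≤
      (if (i : ℕ) < k then lam (i : ℕ) - c else 0) + c * t i := by
    intro i
    by_cases h : (i : ℕ) < k
    · simp only [if_pos h]
      have h1 : c ≤ lam (i : ℕ) := hmono _ _ (le_of_lt h)
      nlinarith [ht1 i]
    · simp only [if_neg h]
      have h1 : lam (i : ℕ) ≤ c := hmono _ _ (le_of_not_gt h)
      nlinarith [ht0 i]
  calc ∑ i : Fin n, lam (i : ℕ) * t i
      ≤ ∑ i : Fin n, ((if (i : ℕ) < k then lam (i : ℕ) - c else 0) + c * t i) :=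
        Finset.sum_le_sum fun i _ => key i
    _ = (∑ i : Fin n, (if (i : ℕ) < k then lam (i : ℕ) - c else 0)) + c * ∑ i, t i := by
        rw [Finset.sum_add_distrib, Finset.mul_sum]
    _ ≤ (∑ i : Fin n, (if (i : ℕ) < k then lam (i : ℕ) - c else 0)) + c * k := by
        have := mul_le_mul_of_nonneg_left hts hc0
        linarith
    _ = ∑ x ∈ Finset.range k, lam x := by
        have h2 : (∑ i : Fin n, (if (i : ℕ) < k then lam (i : ℕ) - c else 0))
            = ∑ x ∈ Finset.range k, (lam x - c) := by
          rw [Fin.sum_univ_eq_sum_range (fun x => if x < k then lam x - c else 0)]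
          rw [← Finset.sum_filter]
          congr 1
          ext x
          simp only [Finset.mem_filter, Finset.mem_range]
          omega
        rw [h2, Finset.sum_sub_distrib, Finset.sum_const, Finset.card_range, nsmul_eq_mul]
        ring

lemma key_col {E : Type*} [NormedAddCommGroup E] [InnerProductSpace ℝ E] {d : ℕ}
    {v : Fin d → E} (hv : Orthonormal ℝ v) (s : E) (c : Fin d → ℝ) :
    ‖s‖ ^ 2 - ∑ l, ⟪v l, s⟫ ^ 2 ≤ ‖s - ∑ l, c l • v l‖ ^ 2 := by
  set b := ∑ l, c l • v l with hb
  have hsb : ⟪s, b⟫ = ∑ l, c l * ⟪s, v l⟫ := by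
    rw [hb, inner_sum]
    exact Finset.sum_congr rfl fun l _ => real_inner_smul_right _ _ _
  have hbb : ⟪b, b⟫ = ∑ l, c l * c l := by
    rw [hb]
    simpa using hv.inner_sum c c Finset.univ
  have hexp : ‖s - b‖ ^ 2 = ‖s‖ ^ 2 - 2 * ⟪s, b⟫ + ‖b‖ ^ 2 := norm_sub_sq_real s b
  have hbn : ‖b‖ ^ 2 = ∑ l, c l * c l := by rw [← real_inner_self_eq_norm_sq]; exact hbb
  have hsym : ∀ l, ⟪s, v l⟫ = ⟪v l, s⟫ := fun l => real_inner_comm _ _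
  have hnonneg : 0 ≤ ∑ l, (c l - ⟪v l, s⟫) ^ 2 := Finset.sum_nonneg fun l _ => sq_nonneg _
  have hsplit : ∑ l, (c l - ⟪v l, s⟫) ^ 2
      = (∑ l, c l * c l) - 2 * (∑ l, c l * ⟪s, v l⟫) + ∑ l, ⟪v l, s⟫ ^ 2 := by
    have h1 : ∀ l, (c l - ⟪v l, s⟫) ^ 2
        = (c l * c l - 2 * (c l * ⟪s, v l⟫)) + ⟪v l, s⟫ ^ 2 := by
      intro l; rw [hsym]; ring
    simp_rw [h1]
    rw [Finset.sum_add_distrib, Finset.sum_sub_distrib, ← Finset.mul_sum]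
  linarith

lemma sum_fin_ite {n : ℕ} (j : ℕ) (f : Fin n → ℝ) :
    (∑ i : Fin n, if (i : ℕ) = j then f i else 0) = if h : j < n then f ⟨j, h⟩ else 0 := by
  by_cases h : j < n
  · rw [dif_pos h, Finset.sum_eq_single (⟨j, h⟩ : Fin n)]
    · simp
    · intro i _ hne; exact if_neg fun hc => hne (Fin.ext hc)
    · intro habs; exact absurd (Finset.mem_univ _) habs
  · rw [dif_neg h]
    exact Finset.sum_eq_zero fun i _ => if_neg fun (hc : (i:ℕ) = j) => h (hc ▸ i.isLt)

lemma eucl_norm_sq {n : ℕ} (x : EuclideanSpace ℝ (Fin n)) :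
    ‖x‖ ^ 2 = ∑ i, (x i) ^ 2 := by
  rw [EuclideanSpace.norm_eq, Real.sq_sqrt (Finset.sum_nonneg fun i _ => sq_nonneg _)]
  simp [Real.norm_eq_abs, sq_abs]

lemma conj_vecMulVec {n m : ℕ} (P : Matrix (Fin n) (Fin n) ℝ) (Q : Matrix (Fin m) (Fin m) ℝ)
    (u : Fin n → ℝ) (w : Fin m → ℝ) (i : Fin n) (j : Fin m) :
    (Pᵀ * vecMulVec u w * Q) i j = (∑ a, P a i * u a) * (∑ b, w b * Q b j) := by
  simp only [Matrix.mul_apply, Matrix.vecMulVec_apply, Matrix.transpose_apply,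
    Finset.sum_mul, Finset.mul_sum]
  rw [Finset.sum_comm]
  conv_rhs => rw [Finset.sum_comm]
  refine Finset.sum_congr rfl (fun a _ => Finset.sum_congr rfl (fun b _ => by ring))

/-- **Eckart–Young–Mirsky theorem** (Frobenius norm): the best rank-`k`
approximation of `A` is given by the truncated SVD `Aₖ = ∑_{i<k} σᵢ Uᵢ Vᵢᵀ`. -/
theorem eckart_young_mirsky {n m r k : ℕ} (hkn : k ≤ n) (hkm : k ≤ m)
    (A : Matrix (Fin n) (Fin m) ℝ)
    (U : Matrix (Fin n) (Fin n) ℝ) (V : Matrix (Fin m) (Fin m) ℝ)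
    (S : Matrix (Fin n) (Fin m) ℝ) (σ : ℕ → ℝ)
    (hU : Uᵀ * U = 1) (hU' : U * Uᵀ = 1)
    (hV : Vᵀ * V = 1) (hV' : V * Vᵀ = 1)
    (hS : ∀ i j, S i j = if (i : ℕ) = (j : ℕ) then σ (i : ℕ) else 0)
    (hσpos : ∀ i, i < r → 0 < σ i)
    (hσzero : ∀ i, r ≤ i → σ i = 0)
    (hσsorted : ∀ i j, i ≤ j → σ j ≤ σ i)
    (hA : A = U * S * Vᵀ)
    (hrank : A.rank = r) (hk : k < r)
    (Ak : Matrix (Fin n) (Fin m) ℝ)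
    (hAk : Ak = ∑ i : Fin k,
      σ (i : ℕ) • vecMulVec (fun a => U a (Fin.castLE hkn i)) (fun b => V b (Fin.castLE hkm i))) :
    ∀ B : Matrix (Fin n) (Fin m) ℝ, B.rank ≤ k →
      frobNorm (A - Ak) ≤ frobNorm (A - B) := by
  intro B hB
  -- basic facts
  have hσnn : ∀ i, 0 ≤ σ i := by
    intro i
    rcases lt_or_ge i r with h | h
    · exact (hσpos i h).le
    · exact (hσzero i h).ge
  have hkltn : k < n := by
    have : r ≤ n := by
      rw [← hrank]
      exact A.rank_le_card_height.trans (Fintype.card_fin n).le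
    omega
  have hdetU : IsUnit Uᵀ.det :=
    IsUnit.of_mul_eq_one U.det (by rw [← Matrix.det_mul, hU, Matrix.det_one])
  have hdetV : IsUnit V.det :=
    IsUnit.of_mul_eq_one Vᵀ.det (by rw [← Matrix.det_mul, hV', Matrix.det_one])
  -- conjugation reduction
  have key0 : ∀ C : Matrix (Fin n) (Fin m) ℝ, A - C = U * (S - Uᵀ * C * V) * Vᵀ := by
    intro C
    rw [Matrix.mul_sub, Matrix.sub_mul, ← hA]
    congr 1
    simp only [Matrix.mul_assoc]
    rw [hV', Matrix.mul_one, ← Matrix.mul_assoc, hU', Matrix.one_mul]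
  have hfrob : ∀ C : Matrix (Fin n) (Fin m) ℝ,
      frobSq (A - C) = frobSq (S - Uᵀ * C * V) := by
    intro C
    rw [key0 C, frobSq_conj U V hU hV]
  -- the truncated part: Uᵀ Ak V is the truncated diagonal
  set Y : Matrix (Fin n) (Fin m) ℝ := S - Uᵀ * Ak * V with hYdef
  have hD : ∀ i j, (Uᵀ * Ak * V) i j
      = if (i : ℕ) = (j : ℕ) ∧ (i : ℕ) < k then σ (i : ℕ) else 0 := by
    intro i j
    have hUo : ∀ p, (∑ a, U a i * U a p) = if i = p then (1 : ℝ) else 0 := by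
      intro p
      rw [show (∑ a, U a i * U a p) = (Uᵀ * U) i p from by simp [Matrix.mul_apply], hU,
        Matrix.one_apply]
    have hVo : ∀ q, (∑ b, V b q * V b j) = if q = j then (1 : ℝ) else 0 := by
      intro q
      rw [show (∑ b, V b q * V b j) = (Vᵀ * V) q j from by simp [Matrix.mul_apply], hV,
        Matrix.one_apply]
    have expand : (Uᵀ * Ak * V) i j = ∑ l : Fin k, σ (l : ℕ) *
        ((if i = Fin.castLE hkn l then (1:ℝ) else 0) *
          (if Fin.castLE hkm l = j then (1:ℝ) else 0)) := by
      rw [hAk, Matrix.mul_sum, Matrix.sum_mul, Matrix.sum_apply]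
      refine Finset.sum_congr rfl fun l _ => ?_
      rw [Matrix.mul_smul, Matrix.smul_mul, Matrix.smul_apply, smul_eq_mul,
        conj_vecMulVec U V _ _ i j, hUo, hVo]
    rw [expand]
    by_cases hik : (i : ℕ) < k
    · rw [Finset.sum_eq_single (⟨(i : ℕ), hik⟩ : Fin k)]
      · have h1 : i = Fin.castLE hkn ⟨(i : ℕ), hik⟩ := by
          apply Fin.ext; simp
        rw [if_pos h1]
        have h2 : (Fin.castLE hkm ⟨(i : ℕ), hik⟩ = j) ↔ ((i : ℕ) = (j : ℕ)) := by
          rw [Fin.ext_iff]; simp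
        by_cases h3 : (i : ℕ) = (j : ℕ)
        · rw [if_pos (h2.mpr h3), if_pos ⟨h3, hik⟩]; ring
        · rw [if_neg (fun hc => h3 (h2.mp hc)), if_neg (fun hc => h3 hc.1)]; ring
      · intro l _ hne
        have : ¬(i = Fin.castLE hkn l) := by
          intro hc
          apply hne
          apply Fin.ext
          simpa [Fin.ext_iff] using hc.symm
        rw [if_neg this]; ring
      · intro habs; exact absurd (Finset.mem_univ _) habs
    · rw [if_neg (fun hc => hik hc.2)]
      refine Finset.sum_eq_zero fun l _ => ?_
      have : ¬(i = Fin.castLE hkn l) := by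
        intro hc
        rw [Fin.ext_iff] at hc
        simp at hc
        omega
      rw [if_neg this]; ring
  have hY : ∀ i j, Y i j = if (i : ℕ) = (j : ℕ) ∧ k ≤ (i : ℕ) then σ (i : ℕ) else 0 := by
    intro i j
    rw [hYdef, Matrix.sub_apply, hS, hD]
    split_ifs <;> first | ring1 | (exfalso; omega)
  -- lower bound for any B
  have lower : ∀ B' : Matrix (Fin n) (Fin m) ℝ, B'.rank ≤ k →
      frobSq Y ≤ frobSq (S - B') := by
    intro B' hB'
    classical
    set eqv : (Fin n → ℝ) ≃ₗ[ℝ] EuclideanSpace ℝ (Fin n) :=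
      (WithLp.linearEquiv 2 ℝ (Fin n → ℝ)).symm with heqv
    set W : Submodule ℝ (EuclideanSpace ℝ (Fin n)) :=
      (LinearMap.range B'.mulVecLin).map (eqv : (Fin n → ℝ) →ₗ[ℝ] EuclideanSpace ℝ (Fin n)) with hW
    have hdim : Module.finrank ℝ W ≤ k := by
      rw [hW]
      exact le_of_eq_of_le (LinearEquiv.finrank_map_eq eqv (LinearMap.range B'.mulVecLin)) hB'
    set d := Module.finrank ℝ W with hd
    set bW := stdOrthonormalBasis ℝ W with hbW
    set v : Fin d → EuclideanSpace ℝ (Fin n) := fun l => ((bW l : W) : EuclideanSpace ℝ (Fin n))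
      with hvdef
    have hv : Orthonormal ℝ v := bW.orthonormal.comp_linearIsometry W.subtypeₗᵢ
    set colS : Fin m → EuclideanSpace ℝ (Fin n) := fun j => eqv (fun i => S i j) with hcolS
    set colB : Fin m → EuclideanSpace ℝ (Fin n) := fun j => eqv (fun i => B' i j) with hcolB
    have hmemB : ∀ j, colB j ∈ W := by
      intro j
      refine ⟨B' *ᵥ Pi.single j 1, LinearMap.mem_range_self _ _, ?_⟩
      rw [Matrix.mulVec_single_one]
      rfl
    set c : Fin m → Fin d → ℝ := fun j l => bW.repr ⟨colB j, hmemB j⟩ l with hc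
    have hcol : ∀ j, colB j = ∑ l, c j l • v l := by
      intro j
      have h := bW.sum_repr ⟨colB j, hmemB j⟩
      calc colB j = ((⟨colB j, hmemB j⟩ : W) : EuclideanSpace ℝ (Fin n)) := rfl
        _ = ((∑ l, bW.repr ⟨colB j, hmemB j⟩ l • bW l : W) : EuclideanSpace ℝ (Fin n)) := by
            rw [h]
        _ = ∑ l, c j l • v l := by
            simp only [AddSubmonoidClass.coe_finset_sum, SetLike.val_smul, hc, hvdef]
            rfl
    have hnorm : ∀ u : Fin n → ℝ, ‖eqv u‖ ^ 2 = ∑ i, (u i) ^ 2 :=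
      fun u => (eucl_norm_sq (eqv u)).trans rfl
    have hfs : frobSq (S - B') = ∑ j, ‖colS j - colB j‖ ^ 2 := by
      rw [frobSq_cols]
      refine Finset.sum_congr rfl fun j _ => ?_
      have h1 : colS j - colB j = eqv (fun i => (S - B') i j) := by
        rw [hcolS, hcolB, ← map_sub]
        congr 1
      rw [h1, hnorm]
    have hkey : ∀ j, ‖colS j‖ ^ 2 - ∑ l, ⟪v l, colS j⟫ ^ 2 ≤ ‖colS j - colB j‖ ^ 2 := by
      intro j
      rw [hcol j]
      exact key_col hv (colS j) (c j)
    set t : Fin n → ℝ := fun i => ∑ l, (v l i) ^ 2 with ht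
    have hp : ∀ (j : Fin m) (l : Fin d),
        ⟪v l, colS j⟫ = if h : (j : ℕ) < n then v l ⟨(j : ℕ), h⟩ * σ (j : ℕ) else 0 := by
      intro j l
      have h1 : ⟪v l, colS j⟫ = ∑ i, (v l i) * S i j := by
        rw [PiLp.inner_apply]
        exact Finset.sum_congr rfl fun i _ => mul_comm _ _
      rw [h1]
      have h2 : ∀ i : Fin n, (v l i) * S i j
          = if (i : ℕ) = (j : ℕ) then v l i * σ (i : ℕ) else 0 := by
        intro i
        rw [hS]
        split_ifs <;> simp
      simp_rw [h2]
      rw [sum_fin_ite (j : ℕ) (fun i : Fin n => v l i * σ (i : ℕ))]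
    have hτ : ∀ j : Fin m, (∑ l, ⟪v l, colS j⟫ ^ 2)
        = if h : (j : ℕ) < n then σ (j : ℕ) ^ 2 * t ⟨(j : ℕ), h⟩ else 0 := by
      intro j
      by_cases h : (j : ℕ) < n
      · rw [dif_pos h]
        simp_rw [hp, dif_pos h]
        rw [ht, Finset.mul_sum]
        exact Finset.sum_congr rfl fun l _ => by ring
      · rw [dif_neg h]
        simp_rw [hp, dif_neg h]
        simp
    have ht0 : ∀ i, 0 ≤ t i := fun i => Finset.sum_nonneg fun l _ => sq_nonneg _
    have ht1 : ∀ i, t i ≤ 1 := by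
      intro i
      have hb := Orthonormal.sum_inner_products_le (𝕜 := ℝ)
        (EuclideanSpace.single i (1 : ℝ)) hv (s := Finset.univ)
      have h2 : ∀ l : Fin d, ⟪v l, EuclideanSpace.single i (1 : ℝ)⟫ = v l i := by
        intro l
        rw [EuclideanSpace.inner_single_right]
        simp
      have h3 : ‖EuclideanSpace.single i (1 : ℝ)‖ = 1 := by
        rw [EuclideanSpace.norm_single]; simp
      rw [h3] at hb
      calc t i = ∑ l, ‖⟪v l, EuclideanSpace.single i (1 : ℝ)⟫‖ ^ 2 := by
            rw [ht]
            exact Finset.sum_congr rfl fun l _ => by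
              rw [h2, Real.norm_eq_abs, sq_abs]
        _ ≤ 1 ^ 2 := hb
        _ = 1 := one_pow 2
    have hts : ∑ i, t i ≤ (k : ℝ) := by
      have h1 : ∑ i, t i = (d : ℝ) := by
        rw [ht]
        rw [Finset.sum_comm]
        have h2 : ∀ l : Fin d, ∑ i, (v l i) ^ 2 = 1 := by
          intro l
          have h3 : ‖v l‖ = 1 := hv.1 l
          have h4 := eucl_norm_sq (v l)
          rw [h3] at h4
          simpa using h4.symm
        simp [h2]
      rw [h1]
      exact_mod_cast hdim
    have habel : ∑ i : Fin n, σ (i : ℕ) ^ 2 * t i ≤ ∑ x ∈ Finset.range k, σ x ^ 2 := by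
      refine abel_bound hkltn (fun x => σ x ^ 2) t ?_ (fun i => sq_nonneg _) ht0 ht1 hts
      intro a b hab
      exact pow_le_pow_left₀ (hσnn b) (hσsorted a b hab) 2
    set F : ℕ → ℝ := fun x => if h : x < n then σ x ^ 2 * t ⟨x, h⟩ else 0 with hF
    have hF0 : ∀ x, 0 ≤ F x := by
      intro x
      simp only [hF]
      by_cases h : x < n
      · rw [dif_pos h]; exact mul_nonneg (sq_nonneg _) (ht0 _)
      · rw [dif_neg h]
    have hτsum : ∑ j : Fin m, (∑ l, ⟪v l, colS j⟫ ^ 2) ≤ ∑ x ∈ Finset.range k, σ x ^ 2 := by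
      have e1 : ∑ j : Fin m, (∑ l, ⟪v l, colS j⟫ ^ 2) = ∑ x ∈ Finset.range m, F x := by
        rw [← Fin.sum_univ_eq_sum_range F m]
        exact Finset.sum_congr rfl fun j _ => hτ j
      have e2 : ∑ x ∈ Finset.range m, F x ≤ ∑ x ∈ Finset.range (n + m), F x :=
        Finset.sum_le_sum_of_subset_of_nonneg
          (Finset.range_subset_range.mpr (Nat.le_add_left m n)) (fun x _ _ => hF0 x)
      have e3 : ∑ x ∈ Finset.range (n + m), F x = ∑ x ∈ Finset.range n, F x := by
        refine (Finset.sum_subset (Finset.range_subset_range.mpr (Nat.le_add_right n m)) ?_).symm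
        intro x _ hx
        rw [Finset.mem_range, not_lt] at hx
        rw [hF]
        exact dif_neg (by omega)
      have e4 : ∑ x ∈ Finset.range n, F x = ∑ i : Fin n, σ (i : ℕ) ^ 2 * t i := by
        rw [← Fin.sum_univ_eq_sum_range F n]
        refine Finset.sum_congr rfl fun i _ => ?_
        simp only [hF, dif_pos i.isLt, Fin.eta]
      rw [e1]
      calc ∑ x ∈ Finset.range m, F x ≤ ∑ x ∈ Finset.range (n + m), F x := e2
        _ = ∑ x ∈ Finset.range n, F x := e3
        _ = ∑ i : Fin n, σ (i : ℕ) ^ 2 * t i := e4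
        _ ≤ ∑ x ∈ Finset.range k, σ x ^ 2 := habel
    have hcolSnorm : ∀ j : Fin m, ‖colS j‖ ^ 2 = if (j : ℕ) < n then σ (j : ℕ) ^ 2 else 0 := by
      intro j
      rw [hcolS, hnorm]
      have h2 : ∀ i : Fin n, (S i j) ^ 2
          = if (i : ℕ) = (j : ℕ) then σ (i : ℕ) ^ 2 else 0 := by
        intro i
        rw [hS]
        split_ifs <;> simp
      simp_rw [h2]
      rw [sum_fin_ite (j : ℕ) (fun i : Fin n => σ (i : ℕ) ^ 2)]
      split_ifs <;> rfl
    have hfrobY : frobSq Y = ∑ j : Fin m,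
        (if (j : ℕ) < n ∧ k ≤ (j : ℕ) then σ (j : ℕ) ^ 2 else 0) := by
      rw [frobSq_cols]
      refine Finset.sum_congr rfl fun j _ => ?_
      have h2 : ∀ i : Fin n, (Y i j) ^ 2 = if (i : ℕ) = (j : ℕ) then
          (if k ≤ (i : ℕ) then σ (i : ℕ) ^ 2 else 0) else 0 := by
        intro i
        rw [hY]
        split_ifs <;> first | ring1 | (exfalso; omega)
      simp_rw [h2]
      rw [sum_fin_ite (j : ℕ) (fun i : Fin n => if k ≤ (i : ℕ) then σ (i : ℕ) ^ 2 else 0)]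
      simp only [Fin.val_mk]
      split_ifs <;> first | rfl | (exfalso; omega)
    -- final combination
    have hsplit : ∑ j : Fin m, ‖colS j‖ ^ 2 - ∑ x ∈ Finset.range k, σ x ^ 2 = frobSq Y := by
      have e5 : ∑ j : Fin m, ‖colS j‖ ^ 2
          = ∑ x ∈ Finset.range m, (if x < n then σ x ^ 2 else 0) := by
        rw [← Fin.sum_univ_eq_sum_range (fun x => if x < n then σ x ^ 2 else 0) m]
        exact Finset.sum_congr rfl fun j _ => hcolSnorm j
      have e6 : ∑ x ∈ Finset.range k, σ x ^ 2
          = ∑ x ∈ Finset.range m, (if x < k then σ x ^ 2 else 0) := by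
        rw [← Finset.sum_filter]
        congr 1
        ext x
        simp only [Finset.mem_filter, Finset.mem_range]
        omega
      have e7 : frobSq Y = ∑ x ∈ Finset.range m,
          (if x < n ∧ k ≤ x then σ x ^ 2 else 0) := by
        rw [hfrobY, ← Fin.sum_univ_eq_sum_range (fun x => if x < n ∧ k ≤ x then σ x ^ 2 else 0) m]
      rw [e5, e6, e7, ← Finset.sum_sub_distrib]
      refine Finset.sum_congr rfl fun x _ => ?_
      split_ifs <;> first | ring1 | (exfalso; omega)
    calc frobSq Y = ∑ j : Fin m, ‖colS j‖ ^ 2 - ∑ x ∈ Finset.range k, σ x ^ 2 := hsplit.symm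
      _ ≤ ∑ j : Fin m, ‖colS j‖ ^ 2 - ∑ j : Fin m, (∑ l, ⟪v l, colS j⟫ ^ 2) := by
          linarith [hτsum]
      _ = ∑ j : Fin m, (‖colS j‖ ^ 2 - ∑ l, ⟪v l, colS j⟫ ^ 2) := by
          rw [Finset.sum_sub_distrib]
      _ ≤ ∑ j : Fin m, ‖colS j - colB j‖ ^ 2 := Finset.sum_le_sum fun j _ => hkey j
      _ = frobSq (S - B') := hfs.symm
  -- combine
  have h1 : frobSq (A - Ak) = frobSq Y := hfrob Ak
  have h2 : frobSq (A - B) = frobSq (S - Uᵀ * B * V) := hfrob B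
  have hrB' : (Uᵀ * B * V).rank ≤ k := by
    rw [Matrix.rank_mul_eq_left_of_isUnit_det V (Uᵀ * B) hdetV,
      Matrix.rank_mul_eq_right_of_isUnit_det Uᵀ B hdetU]
    exact hB
  have h3 : frobSq (A - Ak) ≤ frobSq (A - B) := by
    rw [h1, h2]; exact lower _ hrB'
  exact Real.sqrt_le_sqrt h3
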